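/- Let (Ω, 𝒜, μ) be a probability space and let Y, Ŷ : Ω → {0, 1} be binary random variables and A : Ω → {a, b} a binary group attribute. For each group g ∈ {a, b} with μ(A = g) > 0, define the within-group base rate p_g = μ(Y = 1 | A = g), false positive rate FPR_g = μ(Ŷ = 1 | Y = 0, A = g), false negative rate FNR_g = μ(Ŷ = 0 | Y = 1, A = g), and positive predictive value PPV_g = μ(Y = 1 | Ŷ = 1, A = g), assuming all the conditioning events have positive probability. Suppose 0 < p_a < 1 and 0 < p_b < 1, the two groups have equal error rates FPR_a = FPR_b and FNR_a = FNR_b, equal positive predictive values PPV_a = PPV_b, and the predictor is imperfect and nondegenerate in the sense that FPR_a > 0 and FNR_a < 1. Then the two groups have equal base rates: p_a = p_b. -/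

import Mathlib

open MeasureTheory

lemma bool_split_toReal' {Ω : Type*} [MeasurableSpace Ω] (μ : Measure Ω)
    [IsFiniteMeasure μ] {f : Ω → Bool} (hf : Measurable f) (S : Set Ω) :
    (μ S).toReal = (μ {ω | f ω = true ∧ ω ∈ S}).toReal
      + (μ {ω | f ω = false ∧ ω ∈ S}).toReal := by
  have h1 : {ω | f ω = true ∧ ω ∈ S} = S ∩ {ω | f ω = true} := by
    ext ω; simp [and_comm]
  have h2 : {ω | f ω = false ∧ ω ∈ S} = S \ {ω | f ω = true} := by
    ext ω; simp [and_comm, Bool.not_eq_true]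
  have ht : MeasurableSet {ω | f ω = true} := hf (measurableSet_singleton true)
  rw [h1, h2, ← ENNReal.toReal_add (measure_ne_top μ _) (measure_ne_top μ _),
    measure_inter_add_diff S ht]


/-- Contrapositive form of the group-fairness impossibility result (Kleinberg et al.,
Chouldechova): if two groups (here `false` and `true`, the values of the binary group
attribute `A`) have equal false positive rates, equal false negative rates and equal
positive predictive values, and the predictor is imperfect and nondegenerate
(`FPR > 0`, `FNR < 1`), then the two groups have equal base rates. -/
theorem equal_rates_and_ppv_imp_equal_base_rates
    {Ω : Type*} [MeasurableSpace Ω] (μ : Measure Ω) [IsProbabilityMeasure μ]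
    (Y Yhat A : Ω → Bool)
    (hY : Measurable Y) (hYhat : Measurable Yhat) (hA : Measurable A)
    (p FPR FNR PPV : Bool → ℝ)
    -- within-group base rate: p_g = μ(Y = 1 | A = g)
    (hp : ∀ g, p g = (μ {ω | Y ω = true ∧ A ω = g}).toReal /
                       (μ {ω | A ω = g}).toReal)
    -- within-group false positive rate: FPR_g = μ(Ŷ = 1 | Y = 0, A = g)
    (hFPR : ∀ g, FPR g = (μ {ω | Yhat ω = true ∧ (Y ω = false ∧ A ω = g)}).toReal /
                           (μ {ω | Y ω = false ∧ A ω = g}).toReal)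
    -- within-group false negative rate: FNR_g = μ(Ŷ = 0 | Y = 1, A = g)
    (hFNR : ∀ g, FNR g = (μ {ω | Yhat ω = false ∧ (Y ω = true ∧ A ω = g)}).toReal /
                           (μ {ω | Y ω = true ∧ A ω = g}).toReal)
    -- within-group positive predictive value: PPV_g = μ(Y = 1 | Ŷ = 1, A = g)
    (hPPV : ∀ g, PPV g = (μ {ω | Y ω = true ∧ (Yhat ω = true ∧ A ω = g)}).toReal /
                           (μ {ω | Yhat ω = true ∧ A ω = g}).toReal)
    -- all conditioning events have positive probability
    (hApos : ∀ g, 0 < μ {ω | A ω = g})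
    (hY0pos : ∀ g, 0 < μ {ω | Y ω = false ∧ A ω = g})
    (hY1pos : ∀ g, 0 < μ {ω | Y ω = true ∧ A ω = g})
    (hYhat1pos : ∀ g, 0 < μ {ω | Yhat ω = true ∧ A ω = g})
    -- nondegenerate base rates
    (hpa0 : 0 < p false) (hpa1 : p false < 1)
    (hpb0 : 0 < p true) (hpb1 : p true < 1)
    -- equal error rates and equal PPVs across the two groups
    (hFPReq : FPR false = FPR true)
    (hFNReq : FNR false = FNR true)
    (hPPVeq : PPV false = PPV true)
    -- imperfect, nondegenerate predictor
    (hFPRpos : 0 < FPR false) (hFNRlt : FNR false < 1) :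
    p false = p true := by
  -- positive real versions
  have toRpos : ∀ (S : Set Ω), 0 < μ S → 0 < (μ S).toReal := fun S h =>
    ENNReal.toReal_pos h.ne' (measure_ne_top μ S)
  -- key identity per group
  have key : ∀ g, PPV g * ((1 - FNR g) * p g + FPR g * (1 - p g)) = (1 - FNR g) * p g := by
    intro g
    set N := (μ {ω | A ω = g}).toReal with hN
    set y1 := (μ {ω | Y ω = true ∧ A ω = g}).toReal with hy1
    set y0 := (μ {ω | Y ω = false ∧ A ω = g}).toReal with hy0
    have hNpos : 0 < N := toRpos _ (hApos g)
    have hy1pos : 0 < y1 := toRpos _ (hY1pos g)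
    have hy0pos : 0 < y0 := toRpos _ (hY0pos g)
    have hDpos : 0 < (μ {ω | Yhat ω = true ∧ A ω = g}).toReal := toRpos _ (hYhat1pos g)
    -- N = y1 + y0
    have hsplitN : N = y1 + y0 := bool_split_toReal' μ hY {ω | A ω = g}
    -- y1 = μ(Ŷ=1,Y=1,A=g) + μ(Ŷ=0,Y=1,A=g)
    have hsplity1 : y1 = (μ {ω | Yhat ω = true ∧ (Y ω = true ∧ A ω = g)}).toReal
        + (μ {ω | Yhat ω = false ∧ (Y ω = true ∧ A ω = g)}).toReal :=
      bool_split_toReal' μ hYhat {ω | Y ω = true ∧ A ω = g}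
    -- true positives
    have hTP : (μ {ω | Yhat ω = true ∧ (Y ω = true ∧ A ω = g)}).toReal = (1 - FNR g) * y1 := by
      have h := hFNR g
      rw [← hy1] at h
      have : (μ {ω | Yhat ω = false ∧ (Y ω = true ∧ A ω = g)}).toReal = FNR g * y1 := by
        rw [h]; field_simp
      linarith [hsplity1, this]
    -- false positives
    have hFP : (μ {ω | Yhat ω = true ∧ (Y ω = false ∧ A ω = g)}).toReal = FPR g * y0 := by
      have h := hFPR g
      rw [← hy0] at h
      rw [h]; field_simp
    -- denominator split by Y
    have hD : (μ {ω | Yhat ω = true ∧ A ω = g}).toReal = (1 - FNR g) * y1 + FPR g * y0 := by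
      have h := bool_split_toReal' μ hY {ω | Yhat ω = true ∧ A ω = g}
      have e1 : {ω | Y ω = true ∧ ω ∈ {ω | Yhat ω = true ∧ A ω = g}}
          = {ω | Yhat ω = true ∧ (Y ω = true ∧ A ω = g)} := by
        ext ω; simp; tauto
      have e2 : {ω | Y ω = false ∧ ω ∈ {ω | Yhat ω = true ∧ A ω = g}}
          = {ω | Yhat ω = true ∧ (Y ω = false ∧ A ω = g)} := by
        ext ω; simp; tauto
      rw [e1, e2, hTP, hFP] at h
      exact h
    -- numerator of PPV
    have hNum : (μ {ω | Y ω = true ∧ (Yhat ω = true ∧ A ω = g)}).toReal = (1 - FNR g) * y1 := by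
      have e : {ω | Y ω = true ∧ (Yhat ω = true ∧ A ω = g)}
          = {ω | Yhat ω = true ∧ (Y ω = true ∧ A ω = g)} := by
        ext ω; simp; tauto
      rw [e, hTP]
    -- PPV equation
    have hPPVg : PPV g * ((1 - FNR g) * y1 + FPR g * y0) = (1 - FNR g) * y1 := by
      rw [hPPV g, hNum, ← hD]
      field_simp
    -- p relation: y1 = p g * N
    have hpy : y1 = p g * N := by
      rw [hp g, ← hy1, ← hN]; field_simp
    have hpy0 : y0 = (1 - p g) * N := by
      rw [hpy] at hsplitN; linarith
    rw [hpy, hpy0] at hPPVg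
    have : PPV g * (((1 - FNR g) * p g + FPR g * (1 - p g)) * N) = (1 - FNR g) * p g * N := by
      ring_nf; ring_nf at hPPVg; linarith
    have := mul_right_cancel₀ hNpos.ne' (by linarith [this] : PPV g * ((1 - FNR g) * p g + FPR g * (1 - p g)) * N = ((1 - FNR g) * p g) * N)
    linarith [this]
  have ka := key false
  have kb := key true
  rw [← hFNReq, ← hFPReq, ← hPPVeq] at kb
  set c := 1 - FNR false with hc
  set r := FPR false with hr
  have hcpos : 0 < c := by simp [hc]; linarith
  have hDa : 0 < c * p false + r * (1 - p false) := by
    have h1 : 0 < c * p false := mul_pos hcpos hpa0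
    have h2 : 0 < r * (1 - p false) := mul_pos hFPRpos (by linarith)
    linarith
  have hDb : 0 < c * p true + r * (1 - p true) := by
    have h1 : 0 < c * p true := mul_pos hcpos hpb0
    have h2 : 0 < r * (1 - p true) := mul_pos hFPRpos (by linarith)
    linarith
  -- PPV false = c*p/(D)
  have hPa : PPV false = c * p false / (c * p false + r * (1 - p false)) := by
    field_simp at ka ⊢; linarith [ka]
  have hPb : PPV false = c * p true / (c * p true + r * (1 - p true)) := by
    field_simp at kb ⊢; linarith [kb]
  have heq : c * p false * (c * p true + r * (1 - p true))
      = c * p true * (c * p false + r * (1 - p false)) := by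
    have := hPa.symm.trans hPb
    field_simp at this
    linear_combination c * this
  have : c * r * (p false - p true) = 0 := by ring_nf; ring_nf at heq; linarith
  have hcr : c * r ≠ 0 := ne_of_gt (mul_pos hcpos hFPRpos)
  have := mul_eq_zero.mp this
  rcases this with h | h
  · exact absurd h hcr
  · linarith
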